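/- The quadratic form x₁² - 2x₂² + 5x₃² - 10x₄² is anisotropic over ℚ (equivalently, -1 has no square root in the quaternion algebra (-2,-5)_ℚ, which is a division algebra). -/

import Mathlib

lemma key1 : ∀ a b : ZMod 5, a^2 - 2*b^2 = 0 → a = 0 ∧ b = 0 := by decide
lemma key2 : ∀ a b : ZMod 5, a^2 + 2*b^2 = 0 → a = 0 ∧ b = 0 := by decide

lemma dvd5 {a : ℤ} (h : (a : ZMod 5) = 0) : (5:ℤ) ∣ a :=
  (ZMod.intCast_zmod_eq_zero_iff_dvd a 5).mp h

lemma step1 {a b c d : ℤ} (h : a^2 - 2*b^2 + 5*c^2 - 10*d^2 = 0) :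
    (5:ℤ) ∣ a ∧ (5:ℤ) ∣ b ∧ (5:ℤ) ∣ c ∧ (5:ℤ) ∣ d := by
  have h50 : (5 : ZMod 5) = 0 := by decide
  have h5 : ((a:ZMod 5))^2 - 2*(b:ZMod 5)^2 = 0 := by
    have := congrArg (fun z : ℤ => (z : ZMod 5)) h
    push_cast at this
    linear_combination this + (-(c:ZMod 5)^2 + 2*(d:ZMod 5)^2) * h50
  obtain ⟨ha, hb⟩ := key1 _ _ h5
  obtain ⟨a₁, rfl⟩ := dvd5 ha
  obtain ⟨b₁, rfl⟩ := dvd5 hb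
  have h' : 25*a₁^2 - 50*b₁^2 + 5*c^2 - 10*d^2 = 0 := by linear_combination h
  have h2 : c^2 - 2*d^2 + 5*(a₁^2) - 10*(b₁^2) = 0 := by linarith [h']
  have h5' : ((c:ZMod 5))^2 - 2*(d:ZMod 5)^2 = 0 := by
    have := congrArg (fun z : ℤ => (z : ZMod 5)) h2
    push_cast at this
    linear_combination this + (-(a₁:ZMod 5)^2 + 2*(b₁:ZMod 5)^2) * h50
  obtain ⟨hc, hd⟩ := key1 _ _ h5'
  exact ⟨⟨a₁, rfl⟩, ⟨b₁, rfl⟩, dvd5 hc, dvd5 hd⟩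

lemma step2 {a b c d : ℤ} (h : a^2 - 2*b^2 - 5*c^2 - 10*d^2 = 0) :
    (5:ℤ) ∣ a ∧ (5:ℤ) ∣ b ∧ (5:ℤ) ∣ c ∧ (5:ℤ) ∣ d := by
  have h50 : (5 : ZMod 5) = 0 := by decide
  have h5 : ((a:ZMod 5))^2 - 2*(b:ZMod 5)^2 = 0 := by
    have := congrArg (fun z : ℤ => (z : ZMod 5)) h
    push_cast at this
    linear_combination this + ((c:ZMod 5)^2 + 2*(d:ZMod 5)^2) * h50
  obtain ⟨ha, hb⟩ := key1 _ _ h5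
  obtain ⟨a₁, rfl⟩ := dvd5 ha
  obtain ⟨b₁, rfl⟩ := dvd5 hb
  have h' : 25*a₁^2 - 50*b₁^2 - 5*c^2 - 10*d^2 = 0 := by linear_combination h
  have h2 : c^2 + 2*d^2 - 5*(a₁^2) + 10*(b₁^2) = 0 := by linarith [h']
  have h5' : ((c:ZMod 5))^2 + 2*(d:ZMod 5)^2 = 0 := by
    have := congrArg (fun z : ℤ => (z : ZMod 5)) h2
    push_cast at this
    linear_combination this + ((a₁:ZMod 5)^2 - 2*(b₁:ZMod 5)^2) * h50
  obtain ⟨hc, hd⟩ := key2 _ _ h5'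
  exact ⟨⟨a₁, rfl⟩, ⟨b₁, rfl⟩, dvd5 hc, dvd5 hd⟩

lemma descent (f : ℤ → ℤ → ℤ → ℤ → ℤ)
    (hstep : ∀ a b c d, f a b c d = 0 →
      (5:ℤ) ∣ a ∧ (5:ℤ) ∣ b ∧ (5:ℤ) ∣ c ∧ (5:ℤ) ∣ d)
    (hdiv : ∀ a b c d, f (5*a) (5*b) (5*c) (5*d) = 25 * f a b c d) :
    ∀ a b c d : ℤ, f a b c d = 0 → a = 0 ∧ b = 0 ∧ c = 0 ∧ d = 0 := by
  have main : ∀ n : ℕ, ∀ a b c d : ℤ,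
      a.natAbs + b.natAbs + c.natAbs + d.natAbs = n → f a b c d = 0 →
      a = 0 ∧ b = 0 ∧ c = 0 ∧ d = 0 := by
    intro n
    induction n using Nat.strong_induction_on with
    | _ n ih =>
      intro a b c d hn hf
      obtain ⟨⟨a₁, rfl⟩, ⟨b₁, rfl⟩, ⟨c₁, rfl⟩, ⟨d₁, rfl⟩⟩ := hstep a b c d hf
      norm_num [Int.natAbs_mul] at hn
      rcases Nat.eq_zero_or_pos n with h0 | hpos
      · subst h0
        omega
      · have hf' : f a₁ b₁ c₁ d₁ = 0 := by
          have := hdiv a₁ b₁ c₁ d₁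
          omega
        have hm : a₁.natAbs + b₁.natAbs + c₁.natAbs + d₁.natAbs < n := by omega
        obtain ⟨h1, h2, h3, h4⟩ := ih _ hm a₁ b₁ c₁ d₁ rfl hf'
        subst h1; subst h2; subst h3; subst h4
        norm_num
  exact fun a b c d => main _ a b c d rfl

lemma intAniso1 : ∀ a b c d : ℤ, a^2 - 2*b^2 + 5*c^2 - 10*d^2 = 0 →
    a = 0 ∧ b = 0 ∧ c = 0 ∧ d = 0 :=
  descent (fun a b c d => a^2 - 2*b^2 + 5*c^2 - 10*d^2)
    (fun _ _ _ _ h => step1 h) (fun a b c d => by ring)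

lemma intAniso2 : ∀ a b c d : ℤ, a^2 - 2*b^2 - 5*c^2 - 10*d^2 = 0 →
    a = 0 ∧ b = 0 ∧ c = 0 ∧ d = 0 :=
  descent (fun a b c d => a^2 - 2*b^2 - 5*c^2 - 10*d^2)
    (fun _ _ _ _ h => step2 h) (fun a b c d => by ring)

-- clearing denominators
lemma ratClear (s : ℤ) (x₁ x₂ x₃ x₄ : ℚ)
    (hint : ∀ a b c d : ℤ, a^2 - 2*b^2 + s*c^2 - 10*d^2 = 0 →
      a = 0 ∧ b = 0 ∧ c = 0 ∧ d = 0)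
    (h : x₁ ^ 2 - 2 * x₂ ^ 2 + (s:ℚ) * x₃ ^ 2 - 10 * x₄ ^ 2 = 0) :
    x₁ = 0 ∧ x₂ = 0 ∧ x₃ = 0 ∧ x₄ = 0 := by
  set n : ℤ := (x₁.den : ℤ) * x₂.den * x₃.den * x₄.den with hn
  have hden : ∀ q : ℚ, ((q.den : ℚ)) ≠ 0 := fun q => Nat.cast_ne_zero.mpr q.den_nz
  have hnQ : (n : ℚ) ≠ 0 := by
    rw [hn]
    push_cast
    exact mul_ne_zero (mul_ne_zero (mul_ne_zero (hden x₁) (hden x₂)) (hden x₃)) (hden x₄)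
  set a : ℤ := x₁.num * ((x₂.den : ℤ) * x₃.den * x₄.den) with hadef
  set b : ℤ := x₂.num * ((x₁.den : ℤ) * x₃.den * x₄.den) with hbdef
  set c : ℤ := x₃.num * ((x₁.den : ℤ) * x₂.den * x₄.den) with hcdef
  set d : ℤ := x₄.num * ((x₁.den : ℤ) * x₂.den * x₃.den) with hddef
  have e1 : (x₁.num : ℚ) = x₁ * x₁.den := (Rat.mul_den_eq_num x₁).symm
  have e2 : (x₂.num : ℚ) = x₂ * x₂.den := (Rat.mul_den_eq_num x₂).symm
  have e3 : (x₃.num : ℚ) = x₃ * x₃.den := (Rat.mul_den_eq_num x₃).symm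
  have e4 : (x₄.num : ℚ) = x₄ * x₄.den := (Rat.mul_den_eq_num x₄).symm
  have ha : (a : ℚ) = x₁ * n := by rw [hadef, hn]; push_cast; rw [e1]; ring
  have hb : (b : ℚ) = x₂ * n := by rw [hbdef, hn]; push_cast; rw [e2]; ring
  have hc : (c : ℚ) = x₃ * n := by rw [hcdef, hn]; push_cast; rw [e3]; ring
  have hd : (d : ℚ) = x₄ * n := by rw [hddef, hn]; push_cast; rw [e4]; ring
  have hZ : a^2 - 2*b^2 + s*c^2 - 10*d^2 = 0 := by
    have : ((a^2 - 2*b^2 + s*c^2 - 10*d^2 : ℤ) : ℚ) = 0 := by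
      push_cast
      rw [ha, hb, hc, hd]
      linear_combination ((n:ℚ))^2 * h
    exact_mod_cast this
  obtain ⟨ha0, hb0, hc0, hd0⟩ := hint a b c d hZ
  have k1 : x₁ * n = 0 := by rw [← ha, ha0]; norm_num
  have k2 : x₂ * n = 0 := by rw [← hb, hb0]; norm_num
  have k3 : x₃ * n = 0 := by rw [← hc, hc0]; norm_num
  have k4 : x₄ * n = 0 := by rw [← hd, hd0]; norm_num
  exact ⟨by simpa [hnQ] using mul_eq_zero.mp k1,
    by simpa [hnQ] using mul_eq_zero.mp k2,
    by simpa [hnQ] using mul_eq_zero.mp k3,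
    by simpa [hnQ] using mul_eq_zero.mp k4⟩

open Quaternion in
theorem form_anisotropic_neg_two_neg_five :
    (∀ x₁ x₂ x₃ x₄ : ℚ,
        x₁ ^ 2 - 2 * x₂ ^ 2 + 5 * x₃ ^ 2 - 10 * x₄ ^ 2 = 0 →
        x₁ = 0 ∧ x₂ = 0 ∧ x₃ = 0 ∧ x₄ = 0) ∧
      (¬∃ y : ℍ[ℚ, (-2 : ℚ), (-5 : ℚ)], y ^ 2 = -1) ∧
      (∀ x : ℍ[ℚ, (-2 : ℚ), (-5 : ℚ)], x ≠ 0 → IsUnit x) := by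
  refine ⟨?_, ?_, ?_⟩
  · intro x₁ x₂ x₃ x₄ h
    exact ratClear 5 x₁ x₂ x₃ x₄ intAniso1 (by exact_mod_cast h)
  · rintro ⟨y, hy⟩
    rw [sq] at hy
    have hre := congrArg QuaternionAlgebra.re hy
    have hI := congrArg QuaternionAlgebra.imI hy
    have hJ := congrArg QuaternionAlgebra.imJ hy
    have hK := congrArg QuaternionAlgebra.imK hy
    simp [QuaternionAlgebra.re_mul, QuaternionAlgebra.imI_mul,
      QuaternionAlgebra.imJ_mul, QuaternionAlgebra.imK_mul] at hre hI hJ hK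
    by_cases h0 : y.re = 0
    · rw [h0] at hre
      have key : (1:ℚ) ^ 2 - 2 * y.imI ^ 2 + ((-5:ℤ):ℚ) * y.imJ ^ 2 - 10 * y.imK ^ 2 = 0 := by
        push_cast
        nlinarith [hre]
      have := (ratClear (-5) 1 y.imI y.imJ y.imK
        (fun a b c d h => intAniso2 a b c d (by linear_combination h)) key).1
      norm_num at this
    · have hI0 : y.imI = 0 := by
        rcases mul_eq_zero.mp (by nlinarith [hI] : y.re * y.imI = 0) with h | h
        · exact absurd h h0
        · exact h
      have hJ0 : y.imJ = 0 := by
        rcases mul_eq_zero.mp (by nlinarith [hJ] : y.re * y.imJ = 0) with h | h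
        · exact absurd h h0
        · exact h
      have hK0 : y.imK = 0 := by
        rcases mul_eq_zero.mp (by nlinarith [hK] : y.re * y.imK = 0) with h | h
        · exact absurd h h0
        · exact h
      rw [hI0, hJ0, hK0] at hre
      nlinarith [hre, sq_nonneg y.re]
  · intro x hx
    set N : ℚ := x.re^2 + 2*x.imI^2 + 5*x.imJ^2 + 10*x.imK^2 with hNdef
    have hN : N ≠ 0 := by
      intro h
      have h' : x.re ^ 2 + 2 * x.imI ^ 2 + 5 * x.imJ ^ 2 + 10 * x.imK ^ 2 = 0 := by
        rw [← hNdef]; exact h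
      apply hx
      ext <;> simp <;>
        nlinarith [h', sq_nonneg x.re, sq_nonneg x.imI, sq_nonneg x.imJ, sq_nonneg x.imK]
    have hxs : x * star x = N • (1 : ℍ[ℚ, (-2 : ℚ), (-5 : ℚ)]) := by
      ext <;> simp [QuaternionAlgebra.re_mul, QuaternionAlgebra.imI_mul,
        QuaternionAlgebra.imJ_mul, QuaternionAlgebra.imK_mul, hNdef] <;> ring
    have hsx : star x * x = N • (1 : ℍ[ℚ, (-2 : ℚ), (-5 : ℚ)]) := by
      ext <;> simp [QuaternionAlgebra.re_mul, QuaternionAlgebra.imI_mul,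
        QuaternionAlgebra.imJ_mul, QuaternionAlgebra.imK_mul, hNdef] <;> ring
    refine ⟨⟨x, N⁻¹ • star x, ?_, ?_⟩, rfl⟩
    · rw [mul_smul_comm, hxs, smul_smul, inv_mul_cancel₀ hN, one_smul]
    · rw [smul_mul_assoc, hsx, smul_smul, inv_mul_cancel₀ hN, one_smul]
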